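/- Let L/K be a cyclic extension of degree n with Galois group ⟨σ⟩ and γ ∈ K*. If none of γ, γ², …, γ^{n-1} is a norm from L to K, then the cyclic algebra (L/K, σ, γ) is a division algebra. -/

import Mathlib

/-- norm criterion for a cyclic algebra (L/K, σ, γ) of degree n to be a
division algebra: if none of γ, γ², …, γ^{n-1} is a norm from L to K, then every
nonzero element of the algebra is invertible. -/
theorem cyclic_algebra_is_division_of_non_norm
    {K L A : Type*} [Field K] [Field L] [Algebra K L] [IsGalois K L]
    [Ring A] [Algebra K A]
    (n : ℕ)
    (σ : L ≃ₐ[K] L) (hσ : orderOf σ = n) (hrank : Module.finrank K L = n)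
    (γ : K) (hγ : γ ≠ 0)
    (ι : L →ₐ[K] A) (hinj : Function.Injective ι) (e : A)
    (he : e ^ n = algebraMap K A γ)
    (htwist : ∀ l : L, ι l * e = e * ι (σ l))
    (hbasis : ∀ x : A, ∃! c : Fin n → L, x = ∑ i : Fin n, e ^ (i : ℕ) * ι (c i))
    (hnorm : ∀ i : ℕ, 1 ≤ i → i < n → ∀ l : L, Algebra.norm K l ≠ γ ^ i) :
    ∀ x : A, x ≠ 0 → ∃ y : A, x * y = 1 ∧ y * x = 1 := by
  classical
  intro x hx
  rcases Nat.eq_zero_or_pos n with hn0 | hn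
  · exfalso
    apply hx
    obtain ⟨c, hc, -⟩ := hbasis x
    subst hn0
    simpa using hc
  haveI : FiniteDimensional K L :=
    FiniteDimensional.of_finrank_pos (by rw [hrank]; exact hn)
  letI : Module L A := Module.compHom A ι.toRingHom
  have hsmul : ∀ (l : L) (a : A), l • a = ι l * a := fun _ _ => rfl
  -- basic commutation
  have h1comm : ∀ c : L, e * ι c = ι (σ⁻¹ c) * e := by
    intro c
    have h := htwist (σ⁻¹ c)
    have h2 : σ (σ⁻¹ c) = c := by
      rw [← AlgEquiv.mul_apply, mul_inv_cancel, AlgEquiv.one_apply]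
    rw [h2] at h
    exact h.symm
  have hcomm : ∀ (k : ℕ) (c : L), e ^ k * ι c = ι ((σ⁻¹ ^ k) c) * e ^ k := by
    intro k
    induction k with
    | zero => intro c; simp
    | succ k ih =>
      intro c
      have harg : (σ⁻¹ ^ k) (σ⁻¹ c) = (σ⁻¹ ^ (k + 1)) c := by
        rw [pow_succ, AlgEquiv.mul_apply]
      calc e ^ (k + 1) * ι c = e ^ k * (e * ι c) := by rw [pow_succ, mul_assoc]
        _ = e ^ k * (ι (σ⁻¹ c) * e) := by rw [h1comm]
        _ = (e ^ k * ι (σ⁻¹ c)) * e := by rw [mul_assoc]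
        _ = (ι ((σ⁻¹ ^ k) (σ⁻¹ c)) * e ^ k) * e := by rw [ih]
        _ = ι ((σ⁻¹ ^ (k + 1)) c) * e ^ (k + 1) := by
            rw [harg, mul_assoc, ← pow_succ]
  have hinvpow : ∀ (k : ℕ) (z : L), (σ⁻¹ ^ k) ((σ ^ k) z) = z := by
    intro k z
    rw [← AlgEquiv.mul_apply, inv_pow, inv_mul_cancel, AlgEquiv.one_apply]
  -- representation in the form ∑ dᵢ • e^i
  have hrep : ∀ z : A, ∃! d : Fin n → L, z = ∑ i : Fin n, d i • e ^ (i : ℕ) := by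
    intro z
    obtain ⟨c, hc, huniq⟩ := hbasis z
    refine ⟨fun i => (σ⁻¹ ^ (i : ℕ)) (c i), ?_, ?_⟩
    · rw [hc]
      refine Finset.sum_congr rfl fun i _ => ?_
      rw [hsmul, ← hcomm]
    · intro d hd
      have hcd : (fun i : Fin n => (σ ^ (i : ℕ)) (d i)) = c := by
        apply huniq
        rw [hd]
        refine Finset.sum_congr rfl fun i _ => ?_
        rw [hsmul, hcomm, hinvpow]
      funext i
      rw [← hcd]
      simp only [hinvpow]
  -- basis of A over L
  have hLI : LinearIndependent L (fun i : Fin n => e ^ (i : ℕ)) := by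
    rw [Fintype.linearIndependent_iff]
    intro g hg i
    obtain ⟨d, -, huniq⟩ := hrep 0
    have h1 : g = d := huniq g hg.symm
    have h2 : (fun _ : Fin n => (0 : L)) = d := huniq _ (by simp)
    rw [h1, ← h2]
  have hspan : ⊤ ≤ Submodule.span L (Set.range fun i : Fin n => e ^ (i : ℕ)) := by
    intro z _
    obtain ⟨d, hd, -⟩ := hrep z
    rw [hd]
    exact Submodule.sum_mem _ fun i _ =>
      Submodule.smul_mem _ _ (Submodule.subset_span ⟨i, rfl⟩)
  let bA : Module.Basis (Fin n) L A := Module.Basis.mk hLI hspan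
  haveI : FiniteDimensional L A := Module.Finite.of_basis bA
  have hfinA : Module.finrank L A = n := by
    rw [Module.finrank_eq_card_basis bA, Fintype.card_fin]
  -- norm as product over powers of σ⁻¹
  have hG : Fintype.card (L ≃ₐ[K] L) = n := by
    rw [Fintype.card_eq_nat_card, IsGalois.card_aut_eq_finrank, hrank]
  have hordinv : orderOf (σ⁻¹) = n := by rw [orderOf_inv, hσ]
  have hbij : Function.Bijective (fun k : Fin n => σ⁻¹ ^ (k : ℕ)) := by
    rw [Fintype.bijective_iff_injective_and_card]
    refine ⟨?_, by rw [Fintype.card_fin, hG]⟩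
    intro a b hab
    exact Fin.ext (pow_injOn_Iio_orderOf (by rw [hordinv]; exact a.2)
      (by rw [hordinv]; exact b.2) hab)
  have hnormprod : ∀ z : L,
      algebraMap K L (Algebra.norm K z) = ∏ k : Fin n, (σ⁻¹ ^ (k : ℕ)) z := by
    intro z
    rw [Algebra.norm_eq_prod_automorphisms]
    exact (Fintype.prod_bijective _ hbij (fun k : Fin n => (σ⁻¹ ^ (k : ℕ)) z)
      (fun g => g z) fun k => rfl).symm
  -- the key regularity lemma: no zero divisors
  have hreg : ∀ w : A, w ≠ 0 → ∀ a : A, a * w = 0 → a = 0 := by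
    intro w hw a haw
    by_contra ha
    let J : Submodule L A :=
      { carrier := {z | z * w = 0}
        add_mem' := by
          intro p q hp hq
          simp only [Set.mem_setOf_eq] at *
          rw [add_mul, hp, hq, add_zero]
        zero_mem' := by simp
        smul_mem' := by
          intro c z hz
          simp only [Set.mem_setOf_eq] at *
          show (ι c * z) * w = 0
          rw [mul_assoc, hz, mul_zero] }
    have haJ : a ∈ J := haw
    have hJne : J ≠ ⊤ := by
      intro h
      have h1 : (1 : A) ∈ J := h ▸ Submodule.mem_top
      have h1' : (1 : A) * w = 0 := h1
      rw [one_mul] at h1'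
      exact hw h1'
    set m := Module.finrank L J with hm
    have hm1 : 1 ≤ m := by
      have hne : (⟨a, haJ⟩ : J) ≠ 0 := by
        intro h
        exact ha (by simpa using congrArg Subtype.val h)
      exact Module.finrank_pos_iff_exists_ne_zero.mpr ⟨_, hne⟩
    have hmlt : m < n := by
      have h := Submodule.finrank_lt hJne
      rw [hfinA] at h
      exact h
    let b : Module.Basis (Fin m) L J := Module.finBasis L J
    have hFmem : ∀ v : J, e * (v : A) ∈ J := by
      intro v
      show e * (v : A) * w = 0
      rw [mul_assoc, (v.2 : (v : A) * w = 0), mul_zero]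
    let F : J → J := fun v => ⟨e * (v : A), hFmem v⟩
    let M : Matrix (Fin m) (Fin m) L := fun r i => b.repr (F (b i)) r
    let P : ℕ → Matrix (Fin m) (Fin m) L :=
      fun k => Nat.rec (1 : Matrix (Fin m) (Fin m) L) (fun _ Pk => M * Pk.map ⇑(σ⁻¹)) k
    have hP0 : P 0 = 1 := rfl
    have hPs : ∀ k, P (k + 1) = M * (P k).map ⇑(σ⁻¹) := fun _ => rfl
    have hsumrepr : ∀ v : J, (v : A) = ∑ r : Fin m, b.repr v r • ((b r : J) : A) := by
      intro v
      have hv := congrArg J.subtype (b.sum_repr v)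
      rw [map_sum] at hv
      simp only [map_smul, Submodule.coe_subtype] at hv
      exact hv.symm
    have key : ∀ (k : ℕ) (v : J), e ^ k * (v : A) =
        ∑ r : Fin m, (∑ j : Fin m, P k r j * (σ⁻¹ ^ k) (b.repr v j)) • ((b r : J) : A) := by
      intro k
      induction k with
      | zero =>
        intro v
        rw [pow_zero, one_mul, hsumrepr v]
        refine Finset.sum_congr rfl fun r _ => ?_
        congr 1
        rw [hP0]
        simp [Matrix.one_apply]
      | succ k ih =>
        intro v
        have harg : ∀ z : L, σ⁻¹ ((σ⁻¹ ^ k) z) = (σ⁻¹ ^ (k + 1)) z := by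
          intro z
          rw [pow_succ', AlgEquiv.mul_apply]
        have hFb : ∀ r : Fin m, e * ((b r : J) : A) = ∑ i : Fin m, M i r • ((b i : J) : A) := by
          intro r
          have h0 : ((F (b r) : J) : A) = e * ((b r : J) : A) := rfl
          rw [← h0, hsumrepr (F (b r))]
        calc e ^ (k + 1) * (v : A) = e * (e ^ k * (v : A)) := by
              rw [← mul_assoc, ← pow_succ']
          _ = ∑ r : Fin m, e * ((∑ j : Fin m, P k r j * (σ⁻¹ ^ k) (b.repr v j)) •
                ((b r : J) : A)) := by rw [ih v, Finset.mul_sum]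
          _ = ∑ r : Fin m, ∑ i : Fin m,
                (M i r * σ⁻¹ (∑ j : Fin m, P k r j * (σ⁻¹ ^ k) (b.repr v j))) •
                  ((b i : J) : A) := by
              refine Finset.sum_congr rfl fun r _ => ?_
              rw [hsmul, ← mul_assoc, h1comm, mul_assoc, hFb r, Finset.mul_sum]
              refine Finset.sum_congr rfl fun i _ => ?_
              rw [← hsmul, smul_smul, mul_comm]
          _ = ∑ i : Fin m,
                (∑ r : Fin m, M i r * σ⁻¹ (∑ j : Fin m, P k r j * (σ⁻¹ ^ k) (b.repr v j))) •
                  ((b i : J) : A) := by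
              rw [Finset.sum_comm]
              refine Finset.sum_congr rfl fun i _ => ?_
              rw [Finset.sum_smul]
          _ = ∑ r : Fin m, (∑ j : Fin m, P (k + 1) r j * (σ⁻¹ ^ (k + 1)) (b.repr v j)) •
                ((b r : J) : A) := by
              refine Finset.sum_congr rfl fun i _ => ?_
              congr 1
              rw [hPs k]
              calc ∑ r : Fin m, M i r * σ⁻¹ (∑ j : Fin m, P k r j * (σ⁻¹ ^ k) (b.repr v j))
                  = ∑ r : Fin m, ∑ j : Fin m,
                      M i r * (σ⁻¹ (P k r j) * (σ⁻¹ ^ (k + 1)) (b.repr v j)) := by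
                    refine Finset.sum_congr rfl fun r _ => ?_
                    rw [map_sum, Finset.mul_sum]
                    refine Finset.sum_congr rfl fun j _ => ?_
                    rw [map_mul, harg]
                _ = ∑ j : Fin m, (∑ r : Fin m, M i r * σ⁻¹ (P k r j)) *
                      (σ⁻¹ ^ (k + 1)) (b.repr v j) := by
                    rw [Finset.sum_comm]
                    refine Finset.sum_congr rfl fun j _ => ?_
                    rw [Finset.sum_mul]
                    refine Finset.sum_congr rfl fun r _ => ?_
                    ring
                _ = ∑ j : Fin m, (M * (P k).map ⇑(σ⁻¹)) i j * (σ⁻¹ ^ (k + 1)) (b.repr v j) := by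
                    refine Finset.sum_congr rfl fun j _ => ?_
                    congr 1
    have hτn : ∀ z : L, (σ⁻¹ ^ n) z = z := by
      intro z
      have h : σ⁻¹ ^ n = 1 := by
        rw [inv_pow, ← hσ, pow_orderOf_eq_one, inv_one]
      rw [h, AlgEquiv.one_apply]
    have hbLI : LinearIndependent L (fun r : Fin m => ((b r : J) : A)) :=
      b.linearIndependent.map' J.subtype (Submodule.ker_subtype J)
    have hPn : ∀ r j0 : Fin m, P n r j0 = if r = j0 then algebraMap K L γ else 0 := by
      intro r j0
      have h1 := key n (b j0)
      rw [he] at h1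
      have h2 : algebraMap K A γ * ((b j0 : J) : A) =
          (algebraMap K L γ) • ((b j0 : J) : A) := by
        rw [hsmul, ι.commutes]
      rw [h2] at h1
      have h3 : ∀ i : Fin m,
          (∑ j : Fin m, P n i j * (σ⁻¹ ^ n) (b.repr (b j0) j)) = P n i j0 := by
        intro i
        calc ∑ j : Fin m, P n i j * (σ⁻¹ ^ n) (b.repr (b j0) j)
            = ∑ j : Fin m, P n i j * (if j0 = j then 1 else 0) := by
              refine Finset.sum_congr rfl fun j _ => ?_
              rw [hτn, b.repr_self, Finsupp.single_apply]
          _ = P n i j0 := by simp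
      have h1' : (algebraMap K L γ) • ((b j0 : J) : A) =
          ∑ i : Fin m, P n i j0 • ((b i : J) : A) := by
        rw [h1]
        exact Finset.sum_congr rfl fun i _ => by rw [h3 i]
      have h4 : ∑ i : Fin m,
          ((if i = j0 then algebraMap K L γ else 0) - P n i j0) • ((b i : J) : A) = 0 := by
        have hterm : ∀ i : Fin m,
            ((if i = j0 then algebraMap K L γ else 0) - P n i j0) • ((b i : J) : A) =
            (if i = j0 then algebraMap K L γ else 0) • ((b i : J) : A) -
              P n i j0 • ((b i : J) : A) := fun i => sub_smul _ _ _
        rw [Finset.sum_congr rfl fun i _ => hterm i, Finset.sum_sub_distrib, sub_eq_zero,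
          ← h1']
        simp
      have h5 := Fintype.linearIndependent_iff.mp hbLI _ h4 r
      have h6 : (if r = j0 then algebraMap K L γ else 0) = P n r j0 := sub_eq_zero.mp h5
      exact h6.symm
    have hdetmap : ∀ N : Matrix (Fin m) (Fin m) L, (N.map ⇑(σ⁻¹)).det = σ⁻¹ N.det := by
      intro N
      have h := RingHom.map_det ((σ⁻¹ : L ≃ₐ[K] L) : L →+* L) N
      simpa using h.symm
    have hdetP : ∀ k : ℕ, (P k).det = ∏ j ∈ Finset.range k, (σ⁻¹ ^ j) M.det := by
      intro k
      induction k with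
      | zero => simp [hP0]
      | succ k ih =>
        rw [hPs k, Matrix.det_mul, hdetmap, ih, map_prod, Finset.prod_range_succ']
        simp only [pow_zero, AlgEquiv.one_apply]
        rw [mul_comm]
        congr 1
        refine Finset.prod_congr rfl fun j _ => ?_
        rw [← AlgEquiv.mul_apply, ← pow_succ']
    have hPdet : (P n).det = (algebraMap K L γ) ^ m := by
      have hPnmat : P n = (algebraMap K L γ) • (1 : Matrix (Fin m) (Fin m) L) := by
        ext r j
        rw [hPn r j]
        simp [Matrix.one_apply]
      rw [hPnmat, Matrix.det_smul, Matrix.det_one, mul_one, Fintype.card_fin]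
    have hfinal : Algebra.norm K M.det = γ ^ m := by
      apply (algebraMap K L).injective
      rw [hnormprod M.det, map_pow,
        Fin.prod_univ_eq_prod_range (fun k => (σ⁻¹ ^ k) M.det) n, ← hdetP n, hPdet]
    exact hnorm m hm1 hmlt M.det hfinal
  -- conclude invertibility
  let Rx : A →ₗ[L] A :=
    { toFun := fun p => p * x
      map_add' := fun p q => add_mul p q x
      map_smul' := fun c p => by
        simp only [RingHom.id_apply, hsmul, mul_assoc] }
  have hRinj : Function.Injective Rx := by
    intro p q h
    have h2 : (p - q) * x = 0 := by
      have h3 : p * x - q * x = 0 := sub_eq_zero.mpr h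
      rwa [← sub_mul] at h3
    exact sub_eq_zero.mp (hreg x hx _ h2)
  obtain ⟨y, hy⟩ := LinearMap.surjective_of_injective hRinj 1
  have hy' : y * x = 1 := hy
  have hyne : y ≠ 0 := by
    intro h
    rw [h, zero_mul] at hy'
    exact hx (by rw [← one_mul x, ← hy', zero_mul])
  let Ry : A →ₗ[L] A :=
    { toFun := fun p => p * y
      map_add' := fun p q => add_mul p q y
      map_smul' := fun c p => by
        simp only [RingHom.id_apply, hsmul, mul_assoc] }
  have hRyinj : Function.Injective Ry := by
    intro p q h
    have h2 : (p - q) * y = 0 := by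
      have h3 : p * y - q * y = 0 := sub_eq_zero.mpr h
      rwa [← sub_mul] at h3
    exact sub_eq_zero.mp (hreg y hyne _ h2)
  obtain ⟨z, hz⟩ := LinearMap.surjective_of_injective hRyinj 1
  have hz' : z * y = 1 := hz
  have hzx : z = x := by
    calc z = z * (y * x) := by rw [hy', mul_one]
    _ = (z * y) * x := by rw [mul_assoc]
    _ = x := by rw [hz', one_mul]
  exact ⟨y, by rw [← hzx]; exact hz', hy'⟩
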